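/- Let n ≥ 1 and Q : ℂ → Matrix (Fin n) (Fin n) ℂ. The following are equivalent: (a) for every pair of indices (i, j), the entry function z ↦ Q z i j is meromorphic on all of ℂ and the function z ↦ Q (z⁻¹) i j is meromorphic at 0; (b) there exist a nonzero polynomial q ∈ ℂ[X] and an n×n matrix L with entries in ℂ[X] such that the set {z ∈ ℂ : Q z ≠ (Polynomial.eval z q)⁻¹ • (entrywise evaluation of L at z)} is finite. In other words, a matrix-valued function is meromorphic on the extended complex plane if and only if it is (off a finite set) the ratio of a matrix polynomial to a scalar polynomial. -/

import Mathlib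

open Topology Filter Polynomial

private lemma polyAnalytic' (p : Polynomial ℂ) (x : ℂ) : AnalyticAt ℂ (fun z => p.eval z) x := by
  exact (Polynomial.differentiable p).analyticAt x

private lemma polyBound' (p : Polynomial ℂ) :
    ∃ C : ℝ, ∀ z : ℂ, 1 ≤ ‖z‖ → ‖p.eval z‖ ≤ C * ‖z‖ ^ p.natDegree := by
  refine ⟨∑ i ∈ Finset.range (p.natDegree + 1), ‖p.coeff i‖, fun z hz => ?_⟩
  rw [eval_eq_sum_range, Finset.sum_mul]
  refine (norm_sum_le _ _).trans (Finset.sum_le_sum fun i hi => ?_)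
  rw [norm_mul, norm_pow]
  exact mul_le_mul_of_nonneg_left
    (pow_le_pow_right₀ hz (Nat.lt_succ_iff.mp (Finset.mem_range.mp hi)))
    (norm_nonneg _)

private lemma entire_growth_poly' (m : ℕ) :
    ∀ (g : ℂ → ℂ), Differentiable ℂ g → ∀ (C R : ℝ),
      (∀ z : ℂ, R ≤ ‖z‖ → ‖g z‖ ≤ C * ‖z‖ ^ m) →
      ∃ p : Polynomial ℂ, ∀ z : ℂ, g z = p.eval z := by
  induction m with
  | zero =>
    intro g hg C R hb
    have hcont : ContinuousOn g (Metric.closedBall 0 |R|) := hg.continuous.continuousOn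
    obtain ⟨B, hB⟩ := (isCompact_closedBall (0:ℂ) |R|).exists_bound_of_continuousOn hcont
    have hbdd : ∀ z, ‖g z‖ ≤ max B C := by
      intro z
      rcases le_or_gt ‖z‖ |R| with h | h
      · exact le_trans (hB z (by simpa [Metric.mem_closedBall, Complex.dist_eq, sub_zero] using h))
          (le_max_left _ _)
      · have := hb z (le_trans (le_abs_self R) h.le)
        simpa using this.trans (le_max_right _ _)
    obtain ⟨c, hc⟩ := hg.exists_eq_const_of_bounded
      (Metric.isBounded_range_iff.mpr ⟨2 * max B C, fun x y => by
        calc dist (g x) (g y) ≤ ‖g x‖ + ‖g y‖ := dist_le_norm_add_norm _ _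
          _ ≤ max B C + max B C := add_le_add (hbdd x) (hbdd y)
          _ = 2 * max B C := by ring⟩)
    exact ⟨Polynomial.C c, fun z => by simp [hc]⟩
  | succ m ih =>
    intro g hg C R hb
    have hd : Differentiable ℂ (dslope g 0) := by
      rw [← differentiableOn_univ] at hg ⊢
      exact (Complex.differentiableOn_dslope (Filter.univ_mem)).mpr hg
    have hb' : ∀ z : ℂ, max (max R 1) 1 ≤ ‖z‖ →
        ‖dslope g 0 z‖ ≤ (C + ‖g 0‖) * ‖z‖ ^ m := by
      intro z hz
      have h1 : (1:ℝ) ≤ ‖z‖ := le_trans (le_max_right _ _) hz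
      have hz0 : z ≠ 0 := by
        intro h; rw [h] at h1; simp at h1; linarith
      rw [dslope_of_ne _ hz0, slope_def_field]
      have : (g z - g 0) / (z - 0) = (g z - g 0) / z := by rw [sub_zero]
      rw [this, norm_div]
      rw [div_le_iff₀ (by positivity)]
      calc ‖g z - g 0‖ ≤ ‖g z‖ + ‖g 0‖ := norm_sub_le _ _
        _ ≤ C * ‖z‖ ^ (m+1) + ‖g 0‖ * ‖z‖ ^ (m+1) := by
            refine add_le_add (hb z (le_trans (le_trans (le_max_left _ _) (le_max_left _ _)) hz)) ?_
            nlinarith [norm_nonneg (g 0), one_le_pow₀ h1 (n := m+1)]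
        _ = (C + ‖g 0‖) * ‖z‖ ^ m * ‖z‖ := by ring
    obtain ⟨p, hp⟩ := ih (dslope g 0) hd (C + ‖g 0‖) (max (max R 1) 1) hb'
    refine ⟨Polynomial.C (g 0) + Polynomial.X * p, fun z => ?_⟩
    have := sub_smul_dslope g 0 z
    simp only [sub_zero, smul_eq_mul] at this
    rw [eval_add, eval_C, eval_mul, eval_X, ← hp z]
    rw [this]; ring

private lemma nonanalytic_finite' (f : ℂ → ℂ) (hf : MeromorphicOn f Set.univ)
    (hI : MeromorphicAt (fun z => f z⁻¹) 0) :
    {z : ℂ | ¬ AnalyticAt ℂ f z}.Finite := by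
  have hev := hI.eventually_analyticAt
  rw [eventually_nhdsWithin_iff, Metric.eventually_nhds_iff] at hev
  obtain ⟨ε, hε, hball⟩ := hev
  have hout : ∀ w : ℂ, ε⁻¹ < ‖w‖ → AnalyticAt ℂ f w := by
    intro w hw
    have hw0 : w ≠ 0 := by
      intro h; rw [h] at hw; simp at hw; exact absurd hw (not_lt.mpr (by positivity))
    have hwi : w⁻¹ ≠ 0 := inv_ne_zero hw0
    have hdist : dist w⁻¹ 0 < ε := by
      rw [dist_zero_right, norm_inv]
      exact inv_lt_of_inv_lt₀ (by positivity) hw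
    have h1 : AnalyticAt ℂ (fun z => f z⁻¹) w⁻¹ := hball hdist (by simpa using hwi)
    have h2 : AnalyticAt ℂ ((fun z => f z⁻¹) ∘ (fun z : ℂ => z⁻¹)) w :=
      h1.comp ((analyticAt_id).inv hw0)
    refine h2.congr ?_
    filter_upwards [eventually_ne_nhds hw0] with z hz
    simp [Function.comp, inv_inv]
  have hsub : {z : ℂ | ¬ AnalyticAt ℂ f z} ⊆ Metric.closedBall 0 ε⁻¹ := by
    intro z hz
    rw [Metric.mem_closedBall, dist_zero_right]
    by_contra h
    exact hz (hout z (not_le.mp h))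
  by_contra hinf
  have hinf' : {z : ℂ | ¬ AnalyticAt ℂ f z}.Infinite := hinf
  obtain ⟨x, -, hx⟩ := hinf'.exists_accPt_of_subset_isCompact (isCompact_closedBall 0 ε⁻¹) hsub
  have hev2 := (hf x (Set.mem_univ x)).eventually_analyticAt
  rw [accPt_iff_frequently] at hx
  rw [eventually_nhdsWithin_iff] at hev2
  obtain ⟨y, ⟨hyx, hyS⟩, hy⟩ := (hx.and_eventually hev2).exists
  exact hyS (hy (by simpa using hyx))

private lemma rational_of_meromorphic' (f : ℂ → ℂ) (hf : MeromorphicOn f Set.univ)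
    (hI : MeromorphicAt (fun z => f z⁻¹) 0) :
    ∃ p q : Polynomial ℂ, q ≠ 0 ∧ ∀ z : ℂ, q.eval z ≠ 0 →
      f z = (q.eval z)⁻¹ * p.eval z := by
  classical
  have hS := nonanalytic_finite' f hf hI
  set T := hS.toFinset with hT
  have hk : ∀ s : ℂ, AnalyticAt ℂ
      (fun z => (z - s) ^ (hf s (Set.mem_univ s)).choose • f z) s :=
    fun s => (hf s (Set.mem_univ s)).choose_spec
  set k : ℂ → ℕ := fun s => (hf s (Set.mem_univ s)).choose with hkdef
  set q : Polynomial ℂ := ∏ s ∈ T, (X - C s) ^ (k s) with hqdef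
  have hq0 : q ≠ 0 := Finset.prod_ne_zero_iff.mpr
    (fun s _ => pow_ne_zero _ (X_sub_C_ne_zero s))
  have hqe : ∀ z : ℂ, q.eval z = ∏ s ∈ T, (z - s) ^ (k s) := by
    intro z; simp [hqdef, eval_prod]
  set g : ℂ → ℂ := fun z => q.eval z * f z with hgdef
  have hga : ∀ x : ℂ, AnalyticAt ℂ g x := by
    intro x
    by_cases hx : x ∈ T
    · have heq : ∀ z : ℂ, g z =
          (∏ s ∈ T.erase x, (z - s) ^ (k s)) * ((z - x) ^ (k x) * f z) := by
        intro z
        show eval z q * f z = _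
        rw [hqe, ← Finset.mul_prod_erase _ _ hx]
        ring
      have h1 : AnalyticAt ℂ (fun z : ℂ => ∏ s ∈ T.erase x, (z - s) ^ (k s)) x := by
        have := polyAnalytic' (∏ s ∈ T.erase x, (X - C s) ^ (k s)) x
        simpa [eval_prod] using this
      have h2 : AnalyticAt ℂ (fun z => (z - x) ^ (k x) * f z) x := by
        simpa [smul_eq_mul] using hk x
      exact (h1.mul h2).congr (Filter.Eventually.of_forall fun z => (heq z).symm)
    · have hfx : AnalyticAt ℂ f x := by
        by_contra h
        exact hx (hS.mem_toFinset.mpr h)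
      exact (polyAnalytic' q x).mul hfx
  have hgd : Differentiable ℂ g := fun x => (hga x).differentiableAt
  obtain ⟨m, hm⟩ := hI
  have hc : ContinuousAt (fun z : ℂ => (z - 0) ^ m • f z⁻¹) 0 := hm.continuousAt
  set M : ℝ := ‖(0 - 0 : ℂ) ^ m • f 0⁻¹‖ + 1 with hMdef
  have hMpos : 0 < M := by positivity
  have hev : ∀ᶠ z in 𝓝 (0:ℂ), ‖(z - 0) ^ m • f z⁻¹‖ ≤ M := by
    have := hc.eventually_mem (Metric.ball_mem_nhds _ one_pos)
    filter_upwards [this] with z hz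
    have := mem_ball_iff_norm.mp hz
    have h2 := norm_sub_norm_le ((z - 0) ^ m • f z⁻¹) ((0 - 0 : ℂ) ^ m • f 0⁻¹)
    rw [hMdef]
    linarith
  rw [Metric.eventually_nhds_iff] at hev
  obtain ⟨δ, hδ, hball⟩ := hev
  obtain ⟨Cq, hCq⟩ := polyBound' q
  set Rb : ℝ := max 1 (δ⁻¹ + 1) with hRb
  have hfb : ∀ w : ℂ, Rb ≤ ‖w‖ → ‖f w‖ ≤ M * ‖w‖ ^ m := by
    intro w hw
    have h1 : (1:ℝ) ≤ ‖w‖ := le_trans (le_max_left _ _) hw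
    have hw0 : w ≠ 0 := by intro h; rw [h] at h1; simp at h1; linarith
    have hdinv : δ⁻¹ < ‖w‖ := lt_of_lt_of_le (by linarith [le_max_right 1 (δ⁻¹+1)]) hw
    have hzd : dist w⁻¹ (0:ℂ) < δ := by
      rw [dist_zero_right, norm_inv]
      exact inv_lt_of_inv_lt₀ (by positivity) hdinv
    have hb := hball hzd
    simp only [sub_zero, smul_eq_mul, inv_inv] at hb
    have : f w = w ^ m * ((w⁻¹) ^ m * f w) := by
      rw [← mul_assoc, ← mul_pow, mul_inv_cancel₀ hw0, one_pow, one_mul]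
    rw [this, norm_mul, norm_pow]
    rw [mul_comm M]
    exact mul_le_mul_of_nonneg_left hb (by positivity)
  have hgb : ∀ z : ℂ, Rb ≤ ‖z‖ → ‖g z‖ ≤ (Cq * M) * ‖z‖ ^ (q.natDegree + m) := by
    intro z hz
    have h1 : (1:ℝ) ≤ ‖z‖ := le_trans (le_max_left _ _) hz
    have hq := hCq z h1
    have hf' := hfb z hz
    calc ‖g z‖ = ‖q.eval z‖ * ‖f z‖ := norm_mul _ _
      _ ≤ (Cq * ‖z‖ ^ q.natDegree) * (M * ‖z‖ ^ m) :=
          mul_le_mul hq hf' (norm_nonneg _) ((norm_nonneg _).trans hq)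
      _ = (Cq * M) * ‖z‖ ^ (q.natDegree + m) := by rw [pow_add]; ring
  obtain ⟨p, hp⟩ := entire_growth_poly' (q.natDegree + m) g hgd (Cq * M) Rb hgb
  refine ⟨p, q, hq0, fun z hz => ?_⟩
  field_simp
  rw [mul_comm]
  exact hp z

private lemma eventually_notMem' (E : Set ℂ) (hE : E.Finite) (x : ℂ) :
    ∀ᶠ z in 𝓝[≠] x, z ∉ E := by
  rw [eventually_nhdsWithin_iff]
  have hcl : IsClosed (E \ {x}) := (hE.subset Set.diff_subset).isClosed
  have hx : x ∈ (E \ {x})ᶜ := by simp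
  filter_upwards [hcl.isOpen_compl.mem_nhds hx] with z hz hzx hzE
  exact hz ⟨hzE, by simpa using hzx⟩

private lemma invPolyMeromorphic' (p : Polynomial ℂ) :
    MeromorphicAt (fun z : ℂ => p.eval z⁻¹) 0 := by
  induction p using Polynomial.induction_on' with
  | add p q hp hq =>
    exact (hp.add hq).congr (Filter.Eventually.of_forall fun z => by simp [eval_add])
  | monomial n a =>
    have h1 : MeromorphicAt (fun z : ℂ => a * (z⁻¹) ^ n) 0 := by
      have hid : MeromorphicAt (fun z : ℂ => z) 0 := MeromorphicAt.id 0
      have hinv : MeromorphicAt (fun z : ℂ => z⁻¹) 0 := by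
        have := hid.inv
        simpa [Pi.inv_def] using this
      have hpow : MeromorphicAt (fun z : ℂ => (z⁻¹) ^ n) 0 := by
        have := hinv.pow n
        simpa [Pi.pow_def] using this
      have := (MeromorphicAt.const a (0:ℂ)).mul hpow
      simpa [Pi.mul_def] using this
    exact h1.congr (Filter.Eventually.of_forall fun z => by simp [eval_monomial, mul_comm])

/-- A matrix-valued function `Q : ℂ → Matrix (Fin n) (Fin n) ℂ` is
meromorphic on the extended complex plane (each entry is meromorphic on `ℂ` and
meromorphic at `∞`) if and only if, off a finite set, it is the ratio of a matrix
polynomial `L` to a scalar polynomial `q`. -/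
theorem meromorphic_matrix_iff_ratio_of_matrix_polynomial_to_scalar_polynomial
    (n : ℕ) (hn : 1 ≤ n) (Q : ℂ → Matrix (Fin n) (Fin n) ℂ) :
    (∀ i j : Fin n, MeromorphicOn (fun z : ℂ => Q z i j) Set.univ ∧
        MeromorphicAt (fun z : ℂ => Q z⁻¹ i j) 0) ↔
      (∃ (q : Polynomial ℂ) (L : Matrix (Fin n) (Fin n) (Polynomial ℂ)), q ≠ 0 ∧
        {z : ℂ | Q z ≠ (Polynomial.eval z q)⁻¹ • L.map (Polynomial.eval z)}.Finite) := by
  classical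
  constructor
  · -- hard direction
    intro h
    choose p q hq0 hpq using fun i j => rational_of_meromorphic' (fun z => Q z i j)
      (h i j).1 (h i j).2
    set qq : Polynomial ℂ := ∏ u : Fin n × Fin n, q u.1 u.2 with hqq
    have hqq0 : qq ≠ 0 := Finset.prod_ne_zero_iff.mpr (fun u _ => hq0 u.1 u.2)
    refine ⟨qq, Matrix.of fun i j =>
      p i j * ∏ u ∈ Finset.univ.erase (i, j), q u.1 u.2, hqq0, ?_⟩
    apply Set.Finite.subset (Polynomial.finite_setOf_isRoot hqq0)
    intro z hz
    simp only [Set.mem_setOf_eq] at hz ⊢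
    by_contra hroot
    have hqqz : qq.eval z ≠ 0 := hroot
    apply hz
    ext i j
    have hall : ∀ u : Fin n × Fin n, (q u.1 u.2).eval z ≠ 0 := by
      intro u h0
      apply hqqz
      rw [hqq, eval_prod]
      exact Finset.prod_eq_zero (Finset.mem_univ u) h0
    have ha : (q i j).eval z ≠ 0 := hall (i, j)
    have hrest : (∏ u ∈ Finset.univ.erase (i, j), (q u.1 u.2).eval z) ≠ 0 :=
      Finset.prod_ne_zero_iff.mpr (fun u _ => hall u)
    rw [hpq i j z ha]
    simp only [Matrix.smul_apply, Matrix.map_apply, Matrix.of_apply, smul_eq_mul,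
      eval_mul, eval_prod, hqq]
    rw [← Finset.mul_prod_erase _ (fun u => eval z (q u.1 u.2)) (Finset.mem_univ (i, j)),
      mul_inv]
    field_simp
  · -- easy direction
    rintro ⟨q, L, hq0, hfin⟩ i j
    set E := {z : ℂ | Q z ≠ (Polynomial.eval z q)⁻¹ • L.map (Polynomial.eval z)} with hE
    have hentry : ∀ z ∉ E, Q z i j = (q.eval z)⁻¹ * (L i j).eval z := by
      intro z hz
      have : Q z = (Polynomial.eval z q)⁻¹ • L.map (Polynomial.eval z) := by
        by_contra h; exact hz h
      rw [this, Matrix.smul_apply, Matrix.map_apply, smul_eq_mul]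
    constructor
    · intro x _
      have hr : MeromorphicAt (fun z => (q.eval z)⁻¹ * (L i j).eval z) x := by
        have h1 := ((polyAnalytic' q x).meromorphicAt).inv
        have h2 := (polyAnalytic' (L i j) x).meromorphicAt
        have := h1.mul h2
        simpa [Pi.mul_def, Pi.inv_def] using this
      refine hr.congr ?_
      filter_upwards [eventually_notMem' E hfin x] with z hz
      exact (hentry z hz).symm
    · have hr : MeromorphicAt (fun z : ℂ => (q.eval z⁻¹)⁻¹ * (L i j).eval z⁻¹) 0 := by
        have h1 := (invPolyMeromorphic' q).inv
        have h2 := invPolyMeromorphic' (L i j)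
        have := h1.mul h2
        simpa [Pi.mul_def, Pi.inv_def] using this
      refine hr.congr ?_
      have hE' : ((fun z : ℂ => z⁻¹) '' E).Finite := hfin.image _
      filter_upwards [eventually_notMem' _ hE' 0, self_mem_nhdsWithin] with z hz hz0
      have hz0' : z ≠ 0 := hz0
      have hinv : z⁻¹ ∉ E := by
        intro hmem
        exact hz ⟨z⁻¹, hmem, by simp⟩
      exact (hentry z⁻¹ hinv).symm
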